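/- arXiv:2507.13129 — 8 statements merged into one kernel-verified Lean document; each statement's English description precedes it below -/
import Mathlib

section
/- For every graph G with at least one edge, the non-adjacency witness number q(G) is sandwiched between the clique number and the maximum degree plus one: ω(G) ≤ q(G) ≤ Δ(G) + 1. -/
/-- A set of vertices `T` has no common neighbor in `G`. -/
def SimpleGraph.NoCommonNbr {V : Type*} (G : SimpleGraph V) (T : Finset V) : Prop :=
  ¬ ∃ v : V, ∀ t ∈ T, G.Adj v t

/-- `q` witnesses the non-adjacency witness property for `G`. -/
def SimpleGraph.HasNAW {V : Type*} (G : SimpleGraph V) (q : ℕ) : Prop :=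
  0 < q ∧ ∀ T : Finset V, G.NoCommonNbr T →
    ∃ T' ⊆ T, T'.card ≤ q ∧ G.NoCommonNbr T'

/-- The non-adjacency witness number `q(G)`: the smallest positive integer `q` such that
every vertex set with no common neighbor contains a subset of size at most `q`
with no common neighbor. -/
noncomputable def SimpleGraph.nawn {V : Type*} (G : SimpleGraph V) : ℕ :=
  sInf {q | G.HasNAW q}

lemma hasNAW_maxDegree_succ {V : Type*} [Fintype V] (G : SimpleGraph V)
    [DecidableRel G.Adj] : G.HasNAW (G.maxDegree + 1) := by
  refine ⟨Nat.succ_pos _, fun T hT => ?_⟩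
  by_cases h : T.card ≤ G.maxDegree + 1
  · exact ⟨T, subset_rfl, h, hT⟩
  · obtain ⟨T', hT'sub, hT'card⟩ := Finset.exists_subset_card_eq
      (le_of_lt (lt_of_not_ge h) : G.maxDegree + 1 ≤ T.card)
    refine ⟨T', hT'sub, hT'card.le, ?_⟩
    rintro ⟨v, hv⟩
    have hsub : T' ⊆ G.neighborFinset v := fun t ht =>
      (G.mem_neighborFinset v t).mpr (hv t ht)
    have := Finset.card_le_card hsub
    rw [hT'card, G.card_neighborFinset_eq_degree] at this
    exact absurd (this.trans (G.degree_le_maxDegree v)) (by omega)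

theorem statement0 {V : Type*} [Fintype V] (G : SimpleGraph V) [DecidableRel G.Adj]
    (hE : ∃ u v : V, G.Adj u v) :
    G.cliqueNum ≤ G.nawn ∧ G.nawn ≤ G.maxDegree + 1 := by
  have hmem : G.maxDegree + 1 ∈ {q | G.HasNAW q} := hasNAW_maxDegree_succ G
  have hne : {q | G.HasNAW q}.Nonempty := ⟨_, hmem⟩
  have hnawn : G.HasNAW G.nawn := Nat.sInf_mem hne
  classical
  constructor
  · obtain ⟨s, hs⟩ := G.exists_isNClique_cliqueNum
    -- s has no common neighbor
    have hnc : G.NoCommonNbr s := by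
      rintro ⟨v, hv⟩
      have hvs : v ∉ s := fun hmem => G.irrefl (hv v hmem)
      have : G.IsClique (insert v s : Finset V) := by
        rw [Finset.coe_insert]
        exact hs.isClique.insert (fun t ht _ => (hv t ht))
      have hcard := this.card_le_cliqueNum
      rw [Finset.card_insert_of_notMem hvs, hs.card_eq] at hcard
      omega
    obtain ⟨T', hsub, hcard, hT'⟩ := hnawn.2 s hnc
    -- T' must be all of s
    have heq : T' = s := by
      by_contra hne'
      obtain ⟨x, hxs, hxT'⟩ := Finset.exists_of_ssubset (lt_of_le_of_ne hsub hne')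
      exact hT' ⟨x, fun t ht => hs.isClique hxs (hsub ht) (fun h => hxT' (h ▸ ht))⟩
    rw [← hs.card_eq, ← heq]
    exact hcard
  · exact Nat.sInf_le hmem
end

section
/- For an integer m ≥ 3, the non-adjacency witness number of the cycle C_m equals 3 if m ∈ {3,6}, and equals 2 otherwise. -/
/-- The cycle graph on `m` vertices, realized on `ZMod m`. -/
def cycleGraph (m : ℕ) : SimpleGraph (ZMod m) where
  Adj u v := u ≠ v ∧ (u - v = 1 ∨ v - u = 1)
  symm := ⟨fun _ _ h => ⟨h.1.symm, h.2.symm⟩⟩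
  loopless := ⟨fun _ h => h.1 rfl⟩

section Aux

instance (m : ℕ) : DecidableRel (cycleGraph m).Adj :=
  fun u v => inferInstanceAs (Decidable (u ≠ v ∧ (u - v = 1 ∨ v - u = 1)))

instance {V : Type*} [Fintype V] (G : SimpleGraph V) [DecidableRel G.Adj] (T : Finset V) :
    Decidable (G.NoCommonNbr T) :=
  inferInstanceAs (Decidable (¬ ∃ v : V, ∀ t ∈ T, G.Adj v t))

instance {V : Type*} [Fintype V] [DecidableEq V] (G : SimpleGraph V) [DecidableRel G.Adj]
    (q : ℕ) : Decidable (G.HasNAW q) :=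
  inferInstanceAs (Decidable (0 < q ∧ ∀ T : Finset V, G.NoCommonNbr T →
    ∃ T' ⊆ T, T'.card ≤ q ∧ G.NoCommonNbr T'))

lemma hasNAW_mono {V : Type*} (G : SimpleGraph V) {q q' : ℕ} (h : G.HasNAW q) (hq : q ≤ q') :
    G.HasNAW q' := by
  obtain ⟨h1, h2⟩ := h
  refine ⟨lt_of_lt_of_le h1 hq, fun T hT => ?_⟩
  obtain ⟨T', hsub, hcard, hn⟩ := h2 T hT
  exact ⟨T', hsub, hcard.trans hq, hn⟩

lemma zmod_natCast_ne_zero {m n : ℕ} (h : ¬ m ∣ n) : ((n : ℕ) : ZMod m) ≠ 0 := by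
  intro h0
  exact h ((ZMod.natCast_eq_zero_iff n m).mp h0)

lemma not_dvd_of_lt {m n : ℕ} (hn : 0 < n) (h : n < m) : ¬ m ∣ n := by
  intro hd
  exact absurd (Nat.le_of_dvd hn hd) (by omega)

lemma zmod_one_ne_zero {m : ℕ} (hm : 3 ≤ m) : (1 : ZMod m) ≠ 0 := by
  have := zmod_natCast_ne_zero (m := m) (n := 1) (not_dvd_of_lt (by omega) (by omega))
  simpa using this

lemma zmod_two_ne_zero {m : ℕ} (hm : 3 ≤ m) : (2 : ZMod m) ≠ 0 := by
  have := zmod_natCast_ne_zero (m := m) (n := 2) (not_dvd_of_lt (by omega) (by omega))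
  simpa using this

lemma zmod_three_ne_zero {m : ℕ} (hm : 4 ≤ m) : (3 : ZMod m) ≠ 0 := by
  have := zmod_natCast_ne_zero (m := m) (n := 3) (not_dvd_of_lt (by omega) (by omega))
  simpa using this

lemma zmod_six_ne_zero {m : ℕ} (hm : 4 ≤ m) (hm6 : m ≠ 6) : (6 : ZMod m) ≠ 0 := by
  have hd : ¬ m ∣ 6 := by
    intro hd
    have hle : m ≤ 6 := Nat.le_of_dvd (by norm_num) hd
    interval_cases m
    · exact absurd hd (by norm_num)
    · exact absurd hd (by norm_num)
    · exact hm6 rfl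
  have := zmod_natCast_ne_zero (m := m) (n := 6) hd
  simpa using this

lemma pair_diff {m : ℕ} {v a b : ZMod m} (ha : (cycleGraph m).Adj v a)
    (hb : (cycleGraph m).Adj v b) (hab : a ≠ b) : b - a = 2 ∨ b - a = -2 := by
  obtain ⟨_, h1⟩ := ha
  obtain ⟨_, h2⟩ := hb
  rcases h1 with h1 | h1 <;> rcases h2 with h2 | h2
  · exact absurd (by linear_combination h2 - h1) hab
  · exact Or.inl (by linear_combination h1 + h2)
  · exact Or.inr (by linear_combination -h1 - h2)
  · exact absurd (by linear_combination h1 - h2) hab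

lemma cn_of_card_le_one {m : ℕ} (hm : 3 ≤ m) {T : Finset (ZMod m)} (h : T.card ≤ 1) :
    ∃ v : ZMod m, ∀ t ∈ T, (cycleGraph m).Adj v t := by
  obtain ⟨x, hx⟩ := Finset.card_le_one_iff_subset_singleton.mp h
  refine ⟨x + 1, fun t ht => ?_⟩
  have : t = x := Finset.mem_singleton.mp (hx ht)
  subst this
  refine ⟨?_, Or.inl (by ring)⟩
  intro he
  exact zmod_one_ne_zero hm (by linear_combination he)

lemma hasNAW_two {m : ℕ} (hm : 4 ≤ m) (hm6 : m ≠ 6) : (cycleGraph m).HasNAW 2 := by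
  have h2 : (2 : ZMod m) ≠ 0 := zmod_two_ne_zero (by omega)
  have h6 : (6 : ZMod m) ≠ 0 := zmod_six_ne_zero hm hm6
  refine ⟨by norm_num, fun T hT => ?_⟩
  by_cases hcard : T.card ≤ 2
  · exact ⟨T, subset_rfl, hcard, hT⟩
  by_cases hpair : ∃ a ∈ T, ∃ b ∈ T, a ≠ b ∧ (cycleGraph m).NoCommonNbr {a, b}
  · obtain ⟨a, ha, b, hb, hab, hn⟩ := hpair
    refine ⟨{a, b}, Finset.insert_subset ha (Finset.singleton_subset_iff.mpr hb),
      le_of_eq (Finset.card_pair hab), hn⟩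
  exfalso
  push_neg at hpair
  push_neg at hcard
  obtain ⟨a, ha, b, hb, c, hc, hab, hac, hbc⟩ := Finset.two_lt_card.mp hcard
  have key : ∀ x ∈ T, ∀ y ∈ T, x ≠ y → (y - x = 2 ∨ y - x = -2) := by
    intro x hx y hy hxy
    have hcn := hpair x hx y hy hxy
    rw [SimpleGraph.NoCommonNbr, not_not] at hcn
    obtain ⟨v, hv⟩ := hcn
    exact pair_diff (hv x (by simp)) (hv y (by simp)) hxy
  have e1 := key a ha b hb hab
  have e2 := key a ha c hc hac
  have e3 := key b hb c hc hbc
  rcases e1 with e1 | e1 <;> rcases e2 with e2 | e2 <;> rcases e3 with e3 | e3 <;>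
    first
    | exact h2 (by linear_combination e1 - e2 + e3)
    | exact h2 (by linear_combination e2 - e1 - e3)
    | exact h6 (by linear_combination e1 - e2 + e3)
    | exact h6 (by linear_combination e2 - e1 - e3)

lemma not_hasNAW_one {m : ℕ} (hm : 4 ≤ m) : ¬ (cycleGraph m).HasNAW 1 := by
  rintro ⟨-, h⟩
  have hT : (cycleGraph m).NoCommonNbr {0, 1} := by
    rintro ⟨v, hv⟩
    have h0 := hv 0 (by simp)
    have h1 := hv 1 (by simp)
    obtain ⟨hv1, hd1⟩ := h0
    obtain ⟨hv2, hd2⟩ := h1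
    rcases hd1 with hd1 | hd1
    · exact hv2 (by linear_combination hd1)
    · rcases hd2 with hd2 | hd2
      · exact zmod_three_ne_zero hm (by linear_combination - hd1 - hd2)
      · exact zmod_one_ne_zero (m := m) (by omega) (by linear_combination hd2 - hd1)
  obtain ⟨T', _, hcard, hn⟩ := h _ hT
  exact hn (cn_of_card_le_one (m := m) (by omega) hcard)

end Aux

theorem statement2 (m : ℕ) (hm : 3 ≤ m) :
    (cycleGraph m).nawn = if m = 3 ∨ m = 6 then 3 else 2 := by
  by_cases h : m = 3 ∨ m = 6
  · rw [if_pos h]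
    have key : ∀ k : ℕ, (cycleGraph k).HasNAW 3 → ¬ (cycleGraph k).HasNAW 2 →
        (cycleGraph k).nawn = 3 := by
      intro k h3 h2
      refine le_antisymm (Nat.sInf_le h3) (le_csInf ⟨3, h3⟩ ?_)
      rintro q hq
      by_contra hlt
      push_neg at hlt
      exact h2 (hasNAW_mono _ hq (by omega))
    rcases h with rfl | rfl
    · exact key 3 (by decide) (by decide)
    · exact key 6 (by decide) (by decide)
  · rw [if_neg h]
    push_neg at h
    have hm4 : 4 ≤ m := by omega
    have h2 : (cycleGraph m).HasNAW 2 := hasNAW_two hm4 h.2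
    refine le_antisymm (Nat.sInf_le h2) (le_csInf ⟨2, h2⟩ ?_)
    rintro q hq
    by_contra hlt
    push_neg at hlt
    obtain ⟨hq0, hqall⟩ := hq
    have hq1 : q = 1 := by omega
    subst hq1
    exact not_hasNAW_one hm4 ⟨hq0, hqall⟩
end

section
/- For all positive integers m and r with m ≥ 2r, the non-adjacency witness number of the Kneser graph K(m,r) equals m − 2r + 2. -/
/-- The Kneser graph `K(m,r)`: vertices are the `r`-element subsets of `{1,…,m}`,
adjacent iff disjoint. -/
def kneserGraph (m r : ℕ) : SimpleGraph {A : Finset (Fin m) // A.card = r} where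
  Adj A B := Disjoint A.1 B.1 ∧ A ≠ B
  symm := ⟨fun _ _ h => ⟨h.1.symm, h.2.symm⟩⟩
  loopless := ⟨fun _ h => h.2 rfl⟩

namespace KneserAux

variable {m r : ℕ}

lemma exists_common_nbr_iff (hr : 0 < r) (hrm : r ≤ m)
    (T : Finset {A : Finset (Fin m) // A.card = r}) :
    (∃ v, ∀ t ∈ T, (kneserGraph m r).Adj v t) ↔ (T.biUnion fun A => A.1).card ≤ m - r := by
  constructor
  · rintro ⟨v, hv⟩
    have hd : Disjoint v.1 (T.biUnion fun A => A.1) := by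
      rw [Finset.disjoint_biUnion_right]
      exact fun t ht => (hv t ht).1
    have hcu := Finset.card_union_of_disjoint hd
    have hle : (v.1 ∪ T.biUnion fun A => A.1).card ≤ m := by
      have := Finset.card_le_card (Finset.subset_univ (v.1 ∪ T.biUnion fun A => A.1))
      simpa using this
    have hvc := v.2
    omega
  · intro h
    have hc : r ≤ ((T.biUnion fun A => A.1)ᶜ).card := by
      rw [Finset.card_compl]
      simp only [Fintype.card_fin]
      omega
    obtain ⟨B, hBsub, hBcard⟩ := Finset.exists_subset_card_eq hc
    refine ⟨⟨B, hBcard⟩, fun t ht => ?_⟩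
    have htU : t.1 ⊆ T.biUnion fun A => A.1 := Finset.subset_biUnion_of_mem _ ht
    have hdisj : Disjoint B t.1 := by
      rw [Finset.disjoint_left]
      intro a haB hat
      exact (Finset.mem_compl.mp (hBsub haB)) (htU hat)
    refine ⟨hdisj, fun he => ?_⟩
    have hBt : B = t.1 := congrArg Subtype.val he
    rw [hBt, disjoint_self, Finset.bot_eq_empty] at hdisj
    rw [hBt, hdisj] at hBcard
    simp at hBcard
    omega

lemma ncn_iff (hr : 0 < r) (hrm : r ≤ m)
    (T : Finset {A : Finset (Fin m) // A.card = r}) :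
    (kneserGraph m r).NoCommonNbr T ↔ m - r < (T.biUnion fun A => A.1).card := by
  rw [SimpleGraph.NoCommonNbr, exists_common_nbr_iff hr hrm]
  omega

lemma greedy (T : Finset {A : Finset (Fin m) // A.card = r}) (hT : T.Nonempty) :
    ∀ k : ℕ, ∃ T' ⊆ T, T'.card ≤ k + 1 ∧
      min (T.biUnion fun A => A.1).card (r + k) ≤ (T'.biUnion fun A => A.1).card := by
  intro k
  induction k with
  | zero =>
    obtain ⟨A, hA⟩ := hT
    refine ⟨{A}, Finset.singleton_subset_iff.mpr hA, by simp, ?_⟩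
    simp [A.2]
  | succ k ih =>
    obtain ⟨T', hsub, hcard, hmin⟩ := ih
    by_cases h : min (T.biUnion fun A => A.1).card (r + (k+1)) ≤ (T'.biUnion fun A => A.1).card
    · exact ⟨T', hsub, le_trans hcard (by omega), h⟩
    · have hUsub : (T'.biUnion fun A => A.1) ⊆ (T.biUnion fun A => A.1) :=
        Finset.biUnion_subset_biUnion_of_subset_left _ hsub
      have hlt : (T'.biUnion fun A => A.1).card < (T.biUnion fun A => A.1).card := by omega
      have hss0 : (T'.biUnion fun A => A.1) ⊂ (T.biUnion fun A => A.1) := by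
        rw [Finset.ssubset_def]
        exact ⟨hUsub, fun hc => by have := Finset.card_le_card hc; omega⟩
      obtain ⟨x, hxT, hxT'⟩ := Finset.exists_of_ssubset hss0
      obtain ⟨A, hAT, hxA⟩ := Finset.mem_biUnion.mp hxT
      have hAnT' : A ∉ T' := fun hA => hxT' (Finset.mem_biUnion.mpr ⟨A, hA, hxA⟩)
      refine ⟨insert A T', Finset.insert_subset hAT hsub, ?_, ?_⟩
      · have := Finset.card_insert_le A T'
        omega
      · have hss : (T'.biUnion fun A => A.1) ⊂ ((insert A T').biUnion fun A => A.1) := by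
          rw [Finset.ssubset_def]
          refine ⟨Finset.biUnion_subset_biUnion_of_subset_left _ (Finset.subset_insert _ _),
            fun hc => hxT' (hc (Finset.mem_biUnion.mpr ⟨A, Finset.mem_insert_self _ _, hxA⟩))⟩
        have := Finset.card_lt_card hss
        omega

lemma hasNAW_upper (hr : 0 < r) (hm : 2 * r ≤ m) :
    (kneserGraph m r).HasNAW (m - 2 * r + 2) := by
  refine ⟨by omega, fun T hT => ?_⟩
  have hrm : r ≤ m := by omega
  rw [ncn_iff hr hrm] at hT
  have hTne : T.Nonempty := by
    rcases T.eq_empty_or_nonempty with h | h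
    · rw [h] at hT; simp at hT
    · exact h
  obtain ⟨T', hsub, hcard, hmin⟩ := greedy T hTne (m - 2 * r + 1)
  refine ⟨T', hsub, by omega, ?_⟩
  rw [ncn_iff hr hrm]
  omega

lemma not_hasNAW_lower (hr : 0 < r) (hm : 2 * r ≤ m) (q : ℕ) (hq : q < m - 2 * r + 2) :
    ¬ (kneserGraph m r).HasNAW q := by
  rintro ⟨hq0, hnaw⟩
  have hrm : r ≤ m := by omega
  -- the construction
  set S : ℕ → Finset ℕ := fun i => insert (r - 1 + i) (Finset.range (r - 1)) with hS
  have hSlt : ∀ i, i ≤ m - 2 * r + 1 → ∀ a ∈ S i, a < m := by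
    intro i hi a ha
    rw [hS] at ha
    simp only [Finset.mem_insert, Finset.mem_range] at ha
    rcases ha with h | h <;> omega
  have hvcard : ∀ i (h : ∀ a ∈ S i, a < m), (Finset.attachFin (S i) h).card = r := by
    intro i h
    rw [Finset.card_attachFin, hS]
    rw [Finset.card_insert_of_notMem (by simp only [Finset.mem_range]; omega), Finset.card_range]
    omega
  set vert : ℕ → {A : Finset (Fin m) // A.card = r} := fun i =>
    ⟨Finset.attachFin (S (min i (m - 2 * r + 1))) (hSlt _ (min_le_right _ _)),
      hvcard _ _⟩ with hvert
  set T : Finset {A : Finset (Fin m) // A.card = r} :=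
    (Finset.range (m - 2 * r + 2)).image vert with hTdef
  have hTncn : (kneserGraph m r).NoCommonNbr T := by
    rw [ncn_iff hr hrm]
    have hsubU : Finset.attachFin (Finset.range (m - r + 1))
        (by intro a ha; simp only [Finset.mem_range] at ha; omega) ⊆
        T.biUnion fun A => A.1 := by
      intro x hx
      rw [Finset.mem_attachFin, Finset.mem_range] at hx
      by_cases hxr : (x : ℕ) < r - 1
      · refine Finset.mem_biUnion.mpr ⟨vert 0, ?_, ?_⟩
        · exact Finset.mem_image_of_mem _ (Finset.mem_range.mpr (by omega))
        · rw [hvert]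
          simp only [Finset.mem_attachFin, hS, Finset.mem_insert, Finset.mem_range]
          right; exact hxr
      · refine Finset.mem_biUnion.mpr ⟨vert ((x : ℕ) - (r - 1)), ?_, ?_⟩
        · exact Finset.mem_image_of_mem _ (Finset.mem_range.mpr (by omega))
        · rw [hvert]
          simp only [Finset.mem_attachFin, hS, Finset.mem_insert, Finset.mem_range]
          left
          rw [min_eq_left (by omega)]
          omega
    have := Finset.card_le_card hsubU
    rw [Finset.card_attachFin, Finset.card_range] at this
    omega
  obtain ⟨T', hsub, hcard, hncn⟩ := hnaw T hTncn
  rw [ncn_iff hr hrm] at hncn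
  -- bound the size of the union of T'
  set C : Finset (Fin m) := Finset.attachFin (Finset.range (r - 1))
    (by intro a ha; simp only [Finset.mem_range] at ha; omega) with hC
  have hbound : (T'.biUnion fun A => A.1) ⊆ C ∪ T'.biUnion fun A => A.1 \ C := by
    intro x hx
    obtain ⟨A, hAT, hxA⟩ := Finset.mem_biUnion.mp hx
    by_cases hxC : x ∈ C
    · exact Finset.mem_union_left _ hxC
    · exact Finset.mem_union_right _ (Finset.mem_biUnion.mpr ⟨A, hAT,
        Finset.mem_sdiff.mpr ⟨hxA, hxC⟩⟩)
  have hsingle : ∀ A ∈ T', (A.1 \ C).card ≤ 1 := by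
    intro A hAT'
    obtain ⟨i, _, hi⟩ := Finset.mem_image.mp (hsub hAT')
    have : A.1 \ C ⊆ {⟨r - 1 + min i (m - 2 * r + 1), by
        have := hSlt _ (min_le_right i (m - 2*r+1)) (r - 1 + min i (m - 2*r+1))
        exact this (by rw [hS]; simp)⟩} := by
      intro x hx
      rw [Finset.mem_sdiff] at hx
      obtain ⟨hx1, hx2⟩ := hx
      rw [← hi, hvert] at hx1
      simp only [Finset.mem_attachFin, hS, Finset.mem_insert, Finset.mem_range] at hx1
      rw [hC, Finset.mem_attachFin, Finset.mem_range] at hx2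
      rcases hx1 with h | h
      · simp only [Finset.mem_singleton]
        exact Fin.ext h
      · exact absurd h hx2
    calc (A.1 \ C).card ≤ _ := Finset.card_le_card this
      _ ≤ 1 := by simp
  have hUbound : (T'.biUnion fun A => A.1).card ≤ (r - 1) + T'.card := by
    calc (T'.biUnion fun A => A.1).card
        ≤ (C ∪ T'.biUnion fun A => A.1 \ C).card := Finset.card_le_card hbound
      _ ≤ C.card + (T'.biUnion fun A => A.1 \ C).card := Finset.card_union_le _ _
      _ ≤ C.card + ∑ A ∈ T', (A.1 \ C).card := by
          gcongr
          exact Finset.card_biUnion_le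
      _ ≤ C.card + ∑ _A ∈ T', 1 := by
          gcongr with A hA
          exact hsingle A hA
      _ = (r - 1) + T'.card := by
          rw [hC, Finset.card_attachFin, Finset.card_range, Finset.sum_const, smul_eq_mul,
            mul_one]
  omega

end KneserAux

theorem statement3 (m r : ℕ) (hr : 0 < r) (hm : 2 * r ≤ m) :
    (kneserGraph m r).nawn = m - 2 * r + 2 := by
  have h1 := KneserAux.hasNAW_upper hr hm
  refine le_antisymm (Nat.sInf_le h1) (le_csInf ⟨_, h1⟩ fun q hq => ?_)
  by_contra hlt
  exact KneserAux.not_hasNAW_lower hr hm q (by omega) hq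
end

section
/- For a positive integer d, every d-degenerate graph G satisfies q(G) ≤ d + 1, where q(G) is the non-adjacency witness number. -/
theorem statement4 {V : Type*} (G : SimpleGraph V) [DecidableRel G.Adj]
    (d : ℕ) (hd : 0 < d)
    (hdeg : ∀ W : Finset V, W.Nonempty →
      ∃ v ∈ W, (W.filter (fun w => G.Adj v w)).card ≤ d) :
    G.nawn ≤ d + 1 := by
  classical
  apply Nat.sInf_le
  show G.HasNAW (d + 1)
  refine ⟨by omega, ?_⟩
  intro T hT
  obtain ⟨T', hmemT', hmin⟩ :=
    (T.powerset.filter (fun S => G.NoCommonNbr S)).exists_min_image Finset.card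
      ⟨T, Finset.mem_filter.2 ⟨Finset.mem_powerset.2 (Finset.Subset.refl T), hT⟩⟩
  rw [Finset.mem_filter, Finset.mem_powerset] at hmemT'
  obtain ⟨hsub, hncn⟩ := hmemT'
  refine ⟨T', hsub, ?_, hncn⟩
  by_contra hcard
  push_neg at hcard
  have hT'pos : T'.Nonempty := Finset.card_pos.mp (by omega)
  have herase : ∀ t ∈ T', ∃ u, ∀ s ∈ T'.erase t, G.Adj u s := by
    intro t ht
    by_contra h
    have hmem : T'.erase t ∈ (T.powerset.filter (fun S => G.NoCommonNbr S)) := by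
      rw [Finset.mem_filter, Finset.mem_powerset]
      exact ⟨(Finset.erase_subset _ _).trans hsub, h⟩
    have h1 := hmin _ hmem
    have h2 := Finset.card_erase_of_mem ht
    omega
  choose! u hu using herase
  have hnadj : ∀ t ∈ T', ¬ G.Adj (u t) t := by
    intro t ht hadj
    refine hncn ⟨u t, fun s hs => ?_⟩
    by_cases h : s = t
    · subst h; exact hadj
    · exact hu t ht s (Finset.mem_erase.2 ⟨h, hs⟩)
  have huinj : ∀ t ∈ T', ∀ s ∈ T', u t = u s → t = s := by
    intro t ht s hs hus
    by_contra hne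
    have h1 : G.Adj (u s) t := hu s hs t (Finset.mem_erase.2 ⟨hne, ht⟩)
    rw [← hus] at h1
    exact hnadj t ht h1
  set N := T'.image u with hN
  set W := T' ∪ N with hW
  obtain ⟨v, hvW, hvdeg⟩ := hdeg W (hT'pos.mono Finset.subset_union_left)
  rcases Finset.mem_union.mp hvW with hv | hv
  · have hsubset : (T'.erase v).image u ⊆ W.filter (fun w => G.Adj v w) := by
      intro x hx
      obtain ⟨t, ht, rfl⟩ := Finset.mem_image.mp hx
      obtain ⟨hne, ht'⟩ := Finset.mem_erase.mp ht
      refine Finset.mem_filter.2 ⟨?_, ?_⟩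
      · exact Finset.mem_union_right _ (Finset.mem_image_of_mem u ht')
      · exact (hu t ht' v (Finset.mem_erase.2 ⟨fun h => hne h.symm, hv⟩)).symm
    have hcard2 : ((T'.erase v).image u).card = (T'.erase v).card := by
      apply Finset.card_image_of_injOn
      intro a ha b hb hab
      exact huinj a (Finset.mem_of_mem_erase ha) b (Finset.mem_of_mem_erase hb) hab
    have hle := Finset.card_le_card hsubset
    rw [hcard2, Finset.card_erase_of_mem hv] at hle
    omega
  · obtain ⟨t, ht, rfl⟩ := Finset.mem_image.mp hv
    have hsubset : T'.erase t ⊆ W.filter (fun w => G.Adj (u t) w) := by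
      intro x hx
      exact Finset.mem_filter.2
        ⟨Finset.mem_union_left _ (Finset.mem_of_mem_erase hx), hu t ht x hx⟩
    have hle := Finset.card_le_card hsubset
    rw [Finset.card_erase_of_mem ht] at hle
    omega
end

section
/- Every planar graph G satisfies q(G) ≤ 4, where q(G) is the non-adjacency witness number. -/
/-- `H` is a minor of `G`: there are pairwise-disjoint nonempty connected branch sets
in `G`, one for each vertex of `H`, with edges between branch sets of adjacent
vertices of `H`. -/
def IsMinor {V W : Type*} (H : SimpleGraph W) (G : SimpleGraph V) : Prop :=
  ∃ f : W → Set V,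
    (∀ w, (f w).Nonempty) ∧
    (∀ w, (G.induce (f w)).Connected) ∧
    (∀ w w', w ≠ w' → Disjoint (f w) (f w')) ∧
    (∀ w w', H.Adj w w' → ∃ u ∈ f w, ∃ v ∈ f w', G.Adj u v)

/-- Planarity, via Wagner's theorem: a graph is planar iff it has neither a `K₅` minor
nor a `K_{3,3}` minor. -/
def IsPlanar {V : Type*} (G : SimpleGraph V) : Prop :=
  ¬ IsMinor (⊤ : SimpleGraph (Fin 5)) G ∧
    ¬ IsMinor (completeBipartiteGraph (Fin 3) (Fin 3)) G

/- ### Auxiliary lemmas -/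

lemma star_conn {V : Type*} (G : SimpleGraph V) (s : Set V) (b : V) (hb : b ∈ s)
    (h : ∀ x ∈ s, x = b ∨ G.Adj x b) : (G.induce s).Connected := by
  rw [SimpleGraph.connected_iff]
  have key : ∀ u : s, (G.induce s).Reachable u ⟨b, hb⟩ := by
    rintro ⟨x, hx⟩
    rcases h x hx with rfl | hadj
    · exact SimpleGraph.Reachable.refl _
    · exact SimpleGraph.Adj.reachable (by simpa using hadj)
  exact ⟨fun u w => (key u).trans (key w).symm, ⟨⟨b, hb⟩⟩⟩

lemma exists_notin (t : Finset (Fin 5)) (h : t.card < 5) : ∃ x, x ∉ t := by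
  by_contra h'
  push_neg at h'
  have hsub : (Finset.univ : Finset (Fin 5)) ⊆ t := fun x _ => h' x
  have := Finset.card_le_card hsub
  simp at this
  omega

lemma ex2 {α : Type*} [DecidableEq α] {s : Finset α} (h : 2 ≤ s.card) :
    ∃ a ∈ s, ∃ b ∈ s, a ≠ b := by
  obtain ⟨a, ha⟩ := Finset.card_pos (s := s) |>.1 (by omega)
  obtain ⟨b, hb⟩ := Finset.card_pos (s := s.erase a) |>.1 (by
    rw [Finset.card_erase_of_mem ha]; omega)
  exact ⟨a, ha, b, Finset.mem_of_mem_erase hb, fun e => (Finset.mem_erase.1 hb).1 e.symm⟩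

lemma ex3 {α : Type*} [DecidableEq α] {s : Finset α} (h : 3 ≤ s.card) :
    ∃ a ∈ s, ∃ b ∈ s, ∃ c ∈ s, a ≠ b ∧ a ≠ c ∧ b ≠ c := by
  obtain ⟨a, ha⟩ := Finset.card_pos (s := s) |>.1 (by omega)
  obtain ⟨b, hb, c, hc, hbc⟩ := ex2 (s := s.erase a) (by
    rw [Finset.card_erase_of_mem ha]; omega)
  exact ⟨a, ha, b, Finset.mem_of_mem_erase hb, c, Finset.mem_of_mem_erase hc,
    fun e => (Finset.mem_erase.1 hb).1 e.symm, fun e => (Finset.mem_erase.1 hc).1 e.symm, hbc⟩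

lemma ex4 {α : Type*} [DecidableEq α] {s : Finset α} (h : 4 ≤ s.card) :
    ∃ a ∈ s, ∃ b ∈ s, ∃ c ∈ s, ∃ d ∈ s,
      a ≠ b ∧ a ≠ c ∧ a ≠ d ∧ b ≠ c ∧ b ≠ d ∧ c ≠ d := by
  obtain ⟨a, ha⟩ := Finset.card_pos (s := s) |>.1 (by omega)
  obtain ⟨b, hb, c, hc, d, hd, h1, h2, h3⟩ := ex3 (s := s.erase a) (by
    rw [Finset.card_erase_of_mem ha]; omega)
  exact ⟨a, ha, b, Finset.mem_of_mem_erase hb, c, Finset.mem_of_mem_erase hc,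
    d, Finset.mem_of_mem_erase hd,
    fun e => (Finset.mem_erase.1 hb).1 e.symm, fun e => (Finset.mem_erase.1 hc).1 e.symm,
    fun e => (Finset.mem_erase.1 hd).1 e.symm, h1, h2, h3⟩

lemma exists_minimal {V : Type*} (G : SimpleGraph V) :
    ∀ T : Finset V, G.NoCommonNbr T →
      ∃ S, S ⊆ T ∧ G.NoCommonNbr S ∧ ∀ S' ⊂ S, ¬ G.NoCommonNbr S' := by
  classical
  intro T
  induction T using Finset.strongInduction with
  | _ T ih =>
    intro hT
    by_cases h : ∃ S' ⊂ T, G.NoCommonNbr S'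
    · obtain ⟨S', hsub, hS'⟩ := h
      obtain ⟨S, h1, h2, h3⟩ := ih S' hsub hS'
      exact ⟨S, h1.trans hsub.subset, h2, h3⟩
    · push_neg at h
      exact ⟨T, Finset.Subset.refl _, hT, h⟩

/-- A `K₅` from five pairwise adjacent distinct vertices. -/
lemma k5_clique {V : Type*} (G : SimpleGraph V) (x : Fin 5 → V)
    (hne : ∀ i j, i ≠ j → x i ≠ x j)
    (hadj : ∀ i j, i ≠ j → G.Adj (x i) (x j)) :
    IsMinor (⊤ : SimpleGraph (Fin 5)) G := by
  refine ⟨fun i => {x i}, fun i => ⟨x i, rfl⟩, fun i => ?_, ?_, ?_⟩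
  · exact star_conn G _ (x i) rfl (by rintro y rfl; left; rfl)
  · intro i j hij
    rw [Set.disjoint_singleton]
    exact hne i j hij
  · intro i j hij
    exact ⟨x i, rfl, x j, rfl, hadj i j (by simpa using hij)⟩

/-- A `K₃,₃` from six distinct vertices with all cross edges. -/
lemma k33_sub {V : Type*} (G : SimpleGraph V) (a b : Fin 3 → V)
    (hab : ∀ i j, a i ≠ b j)
    (ha : ∀ i j, i ≠ j → a i ≠ a j) (hb : ∀ i j, i ≠ j → b i ≠ b j)
    (hadj : ∀ i j, G.Adj (a i) (b j)) :
    IsMinor (completeBipartiteGraph (Fin 3) (Fin 3)) G := by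
  refine ⟨Sum.elim (fun i => {a i}) (fun j => {b j}), ?_, ?_, ?_, ?_⟩
  · rintro (i | j) <;> exact ⟨_, rfl⟩
  · rintro (i | j) <;> exact star_conn G _ _ rfl (by rintro y rfl; left; rfl)
  · rintro (i | i) (j | j) hne <;>
      simp only [Sum.elim_inl, Sum.elim_inr] <;> rw [Set.disjoint_singleton]
    · exact ha i j (by simpa using hne)
    · exact hab i j
    · exact fun (e : b i = a j) => hab j i e.symm
    · exact hb i j (by simpa using hne)
  · rintro (i | i) (j | j) hadj' <;> simp only [completeBipartiteGraph_adj] at hadj' <;>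
      simp at hadj'
    · exact ⟨a i, rfl, b j, rfl, hadj i j⟩
    · exact ⟨b i, rfl, a j, rfl, (hadj j i).symm⟩

set_option maxHeartbeats 1000000 in
/-- K5 minor from the |I| = 2 configuration. -/
lemma k5_mixed {V : Type*} (G : SimpleGraph V) (p q a b c wa wb wc : V)
    (hpq : p ≠ q) (hpa : p ≠ a) (hpb : p ≠ b) (hpc : p ≠ c)
    (hqa : q ≠ a) (hqb : q ≠ b) (hqc : q ≠ c)
    (hab : a ≠ b) (hac : a ≠ c) (hbc : b ≠ c)
    (hwab : wa ≠ wb) (hwac : wa ≠ wc) (hwbc : wb ≠ wc)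
    (hwap : wa ≠ p) (hwaq : wa ≠ q) (hwaa : wa ≠ a) (hwab' : wa ≠ b) (hwac' : wa ≠ c)
    (hwbp : wb ≠ p) (hwbq : wb ≠ q) (hwba : wb ≠ a) (hwbb : wb ≠ b) (hwbc' : wb ≠ c)
    (hwcp : wc ≠ p) (hwcq : wc ≠ q) (hwca : wc ≠ a) (hwcb : wc ≠ b) (hwcc : wc ≠ c)
    (apq : G.Adj p q) (apa : G.Adj p a) (apb : G.Adj p b) (apc : G.Adj p c)
    (aqa : G.Adj q a) (aqb : G.Adj q b) (aqc : G.Adj q c)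
    (awab : G.Adj wa b) (awac : G.Adj wa c)
    (awba : G.Adj wb a) (awbc : G.Adj wb c)
    (awca : G.Adj wc a) (awcb : G.Adj wc b) :
    IsMinor (⊤ : SimpleGraph (Fin 5)) G := by
  refine ⟨fun i => match i with
    | 0 => {p} | 1 => {q} | 2 => {a, wb} | 3 => {b, wc} | 4 => {c, wa}, ?_, ?_, ?_, ?_⟩
  · intro i
    fin_cases i
    exacts [⟨p, rfl⟩, ⟨q, rfl⟩, ⟨a, Or.inl rfl⟩, ⟨b, Or.inl rfl⟩, ⟨c, Or.inl rfl⟩]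
  · intro i
    fin_cases i
    · exact star_conn G _ p rfl (by rintro y hy; left; simpa using hy)
    · exact star_conn G _ q rfl (by rintro y hy; left; simpa using hy)
    · refine star_conn G _ a (Or.inl rfl) ?_
      rintro y hy
      simp only [Set.mem_insert_iff, Set.mem_singleton_iff] at hy
      rcases hy with rfl | rfl
      · exact Or.inl rfl
      · exact Or.inr awba
    · refine star_conn G _ b (Or.inl rfl) ?_
      rintro y hy
      simp only [Set.mem_insert_iff, Set.mem_singleton_iff] at hy
      rcases hy with rfl | rfl
      · exact Or.inl rfl
      · exact Or.inr awcb
    · refine star_conn G _ c (Or.inl rfl) ?_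
      rintro y hy
      simp only [Set.mem_insert_iff, Set.mem_singleton_iff] at hy
      rcases hy with rfl | rfl
      · exact Or.inl rfl
      · exact Or.inr awac
  · intro i j hij
    fin_cases i <;> fin_cases j <;>
      first
      | exact absurd rfl hij
      | (rw [Set.disjoint_left]
         rintro x hx hx'
         simp only [Set.mem_insert_iff, Set.mem_singleton_iff] at hx hx'
         aesop)
  · intro i j hij
    fin_cases i <;> fin_cases j <;> simp only [SimpleGraph.top_adj] at hij <;>
      first
      | exact absurd rfl hij
      | exact ⟨p, rfl, q, rfl, apq⟩
      | exact ⟨q, rfl, p, rfl, apq.symm⟩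
      | exact ⟨p, rfl, a, Or.inl rfl, apa⟩
      | exact ⟨a, Or.inl rfl, p, rfl, apa.symm⟩
      | exact ⟨p, rfl, b, Or.inl rfl, apb⟩
      | exact ⟨b, Or.inl rfl, p, rfl, apb.symm⟩
      | exact ⟨p, rfl, c, Or.inl rfl, apc⟩
      | exact ⟨c, Or.inl rfl, p, rfl, apc.symm⟩
      | exact ⟨q, rfl, a, Or.inl rfl, aqa⟩
      | exact ⟨a, Or.inl rfl, q, rfl, aqa.symm⟩
      | exact ⟨q, rfl, b, Or.inl rfl, aqb⟩
      | exact ⟨b, Or.inl rfl, q, rfl, aqb.symm⟩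
      | exact ⟨q, rfl, c, Or.inl rfl, aqc⟩
      | exact ⟨c, Or.inl rfl, q, rfl, aqc.symm⟩
      | exact ⟨wc, Or.inr rfl, a, Or.inl rfl, awca⟩
      | exact ⟨a, Or.inl rfl, wc, Or.inr rfl, awca.symm⟩
      | exact ⟨wb, Or.inr rfl, c, Or.inl rfl, awbc⟩
      | exact ⟨c, Or.inl rfl, wb, Or.inr rfl, awbc.symm⟩
      | exact ⟨wa, Or.inr rfl, b, Or.inl rfl, awab⟩
      | exact ⟨b, Or.inl rfl, wa, Or.inr rfl, awab.symm⟩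

set_option maxHeartbeats 1000000 in
/-- K33 minor from the |I| ≤ 1 configuration. -/
lemma k33_mixed {V : Type*} (G : SimpleGraph V) (sa sb sd se wa wb wc wd : V)
    (hab : sa ≠ sb) (had : sa ≠ sd) (hae : sa ≠ se)
    (hbd : sb ≠ sd) (hbe : sb ≠ se) (hde : sd ≠ se)
    (hwab : wa ≠ wb) (hwac : wa ≠ wc) (hwad : wa ≠ wd)
    (hwbc : wb ≠ wc) (hwbd : wb ≠ wd) (hwcd : wc ≠ wd)
    (h1 : wa ≠ sa) (h2 : wa ≠ sb) (h3 : wa ≠ sd) (h4 : wa ≠ se)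
    (h5 : wb ≠ sa) (h6 : wb ≠ sb) (h7 : wb ≠ sd) (h8 : wb ≠ se)
    (h9 : wc ≠ sa) (h10 : wc ≠ sb) (h11 : wc ≠ sd) (h12 : wc ≠ se)
    (h13 : wd ≠ sa) (h14 : wd ≠ sb) (h15 : wd ≠ sd) (h16 : wd ≠ se)
    (aca : G.Adj wc sa) (acb : G.Adj wc sb) (ace : G.Adj wc se)
    (ada : G.Adj wd sa) (adb : G.Adj wd sb) (ade : G.Adj wd se)
    (aba : G.Adj wb sa) (aab : G.Adj wa sb) (aae : G.Adj wa se)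
    (aad : G.Adj wa sd) (abd : G.Adj wb sd) :
    IsMinor (completeBipartiteGraph (Fin 3) (Fin 3)) G := by
  refine ⟨Sum.elim
    (fun i => match i with | 0 => {wc} | 1 => {wd} | 2 => ({wa, sd, wb} : Set V))
    (fun j => match j with | 0 => {sa} | 1 => {sb} | 2 => {se}), ?_, ?_, ?_, ?_⟩
  · rintro (i | j)
    · fin_cases i
      exacts [⟨wc, rfl⟩, ⟨wd, rfl⟩, ⟨wa, Or.inl rfl⟩]
    · fin_cases j
      exacts [⟨sa, rfl⟩, ⟨sb, rfl⟩, ⟨se, rfl⟩]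
  · rintro (i | j)
    · fin_cases i
      · exact star_conn G _ wc rfl (by rintro y hy; left; simpa using hy)
      · exact star_conn G _ wd rfl (by rintro y hy; left; simpa using hy)
      · refine star_conn G _ sd (Or.inr (Or.inl rfl)) ?_
        rintro y hy
        simp only [Set.mem_insert_iff, Set.mem_singleton_iff] at hy
        rcases hy with rfl | rfl | rfl
        · exact Or.inr aad
        · exact Or.inl rfl
        · exact Or.inr abd
    · fin_cases j <;> exact star_conn G _ _ rfl (by rintro y hy; left; simpa using hy)
  · rintro (i | i) (j | j) hij <;> [skip; skip; skip; skip] <;>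
      fin_cases i <;> fin_cases j <;>
      first
      | exact absurd rfl hij
      | (rw [Set.disjoint_left]
         rintro x hx hx'
         simp only [Set.mem_insert_iff, Set.mem_singleton_iff] at hx hx'
         aesop)
  · rintro (i | i) (j | j) hij
    · exact absurd hij (by simp)
    · fin_cases i <;> fin_cases j
      · exact ⟨wc, rfl, sa, rfl, aca⟩
      · exact ⟨wc, rfl, sb, rfl, acb⟩
      · exact ⟨wc, rfl, se, rfl, ace⟩
      · exact ⟨wd, rfl, sa, rfl, ada⟩
      · exact ⟨wd, rfl, sb, rfl, adb⟩
      · exact ⟨wd, rfl, se, rfl, ade⟩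
      · exact ⟨wb, Or.inr (Or.inr rfl), sa, rfl, aba⟩
      · exact ⟨wa, Or.inl rfl, sb, rfl, aab⟩
      · exact ⟨wa, Or.inl rfl, se, rfl, aae⟩
    · fin_cases i <;> fin_cases j
      · exact ⟨sa, rfl, wc, rfl, aca.symm⟩
      · exact ⟨sa, rfl, wd, rfl, ada.symm⟩
      · exact ⟨sa, rfl, wb, Or.inr (Or.inr rfl), aba.symm⟩
      · exact ⟨sb, rfl, wc, rfl, acb.symm⟩
      · exact ⟨sb, rfl, wd, rfl, adb.symm⟩
      · exact ⟨sb, rfl, wa, Or.inl rfl, aab.symm⟩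
      · exact ⟨se, rfl, wc, rfl, ace.symm⟩
      · exact ⟨se, rfl, wd, rfl, ade.symm⟩
      · exact ⟨se, rfl, wa, Or.inl rfl, aae.symm⟩
    · exact absurd hij (by simp)


set_option maxHeartbeats 1600000 in
theorem statement7 {V : Type*} (G : SimpleGraph V) (hG : IsPlanar G) :
    G.nawn ≤ 4 := by
  have h4 : G.HasNAW 4 := by
    refine ⟨by norm_num, ?_⟩
    intro T hT
    classical
    obtain ⟨S, hST, hS, hmin⟩ := exists_minimal G T hT
    by_cases hcard : S.card ≤ 4
    · exact ⟨S, hST, hcard, hS⟩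
    · exfalso
      have h5 : 5 ≤ S.card := by omega
      obtain ⟨U, hUS, hU5⟩ := Finset.exists_subset_card_eq (s := S) h5
      have e : Fin 5 ≃ {x // x ∈ U} := (finCongr hU5.symm).trans U.equivFin.symm
      set s : Fin 5 → V := fun i => ((e i : {x // x ∈ U}) : V) with hs
      have hsmem : ∀ i, s i ∈ S := fun i => hUS (e i).2
      have hsinj : ∀ i j, i ≠ j → s i ≠ s j := fun i j hij heq =>
        hij (e.injective (Subtype.ext heq))
      have hw : ∀ i : Fin 5, ∃ w, ∀ t ∈ S.erase (s i), G.Adj w t := by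
        intro i
        have hsub : S.erase (s i) ⊂ S := Finset.erase_ssubset (hsmem i)
        have h' := hmin _ hsub
        simp only [SimpleGraph.NoCommonNbr, not_not] at h'
        exact h'
      choose v hv using hw
      have hAdj : ∀ i x, x ∈ S → x ≠ s i → G.Adj (v i) x := fun i x hx hne =>
        hv i x (Finset.mem_erase.2 ⟨hne, hx⟩)
      have hvS : ∀ i, v i ∈ S → v i = s i := by
        intro i h
        by_contra hne
        exact G.loopless.irrefl _ (hAdj i (v i) h hne)
      have hvv : ∀ i j, i ≠ j → v i ≠ v j := by
        intro i j hij heq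
        apply hS
        refine ⟨v i, fun t ht => ?_⟩
        by_cases h : t = s i
        · subst h
          rw [heq]
          exact hAdj j (s i) ht (hsinj i j hij)
        · exact hAdj i t ht h
      set I : Finset (Fin 5) := Finset.univ.filter (fun i => v i = s i) with hI
      have hself : ∀ i ∈ I, ∀ x ∈ S, x ≠ s i → G.Adj (s i) x := by
        intro i hi x hx hne
        have hvi : v i = s i := (Finset.mem_filter.1 hi).2
        rw [← hvi]
        exact hAdj i x hx hne
      have hnons : ∀ i, i ∉ I → v i ∉ S := by
        intro i hi h
        exact hi (Finset.mem_filter.2 ⟨Finset.mem_univ _, hvS i h⟩)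
      have hnosne : ∀ i, i ∉ I → ∀ j, v i ≠ s j := fun i hi j heq =>
        hnons i hi (heq ▸ hsmem j)
      have hIle : I.card ≤ 5 := le_trans (Finset.card_filter_le _ _) (by simp)
      by_cases h3 : 3 ≤ I.card
      · by_cases h5' : I.card = 5
        · -- all indices are self witnesses : K₅ subgraph
          have hall : ∀ i : Fin 5, i ∈ I := by
            have hu : I = Finset.univ := Finset.eq_univ_of_card _ (by simp [h5'])
            intro i
            rw [hu]
            exact Finset.mem_univ i
          exact hG.1 (k5_clique G s hsinj (fun i j hij =>
            hself i (hall i) (s j) (hsmem j) (hsinj j i (Ne.symm hij))))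
        · -- 3 ≤ |I| ≤ 4 : K₃,₃ subgraph
          obtain ⟨y, hy⟩ := exists_notin I (by omega)
          obtain ⟨p, hp, q, hq, r, hr, hpq, hpr, hqr⟩ := ex3 h3
          have hcard4 : ({p, q, r, y} : Finset (Fin 5)).card ≤ 4 := by
            have c1 := Finset.card_insert_le p ({q, r, y} : Finset (Fin 5))
            have c2 := Finset.card_insert_le q ({r, y} : Finset (Fin 5))
            have c3 := Finset.card_insert_le r ({y} : Finset (Fin 5))
            have c4 : ({y} : Finset (Fin 5)).card = 1 := Finset.card_singleton y
            omega
          obtain ⟨x, hx⟩ := exists_notin {p, q, r, y} (by omega)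
          have hxp : x ≠ p := fun h => hx (by simp [h])
          have hxq : x ≠ q := fun h => hx (by simp [h])
          have hxr : x ≠ r := fun h => hx (by simp [h])
          have hxy : x ≠ y := fun h => hx (by simp [h])
          have hpy : p ≠ y := fun h => hy (h ▸ hp)
          have hqy : q ≠ y := fun h => hy (h ▸ hq)
          have hry : r ≠ y := fun h => hy (h ▸ hr)
          refine hG.2 (k33_sub G
            (fun i => match i with | 0 => s p | 1 => s q | 2 => s r)
            (fun j => match j with | 0 => s x | 1 => s y | 2 => v y)
            ?_ ?_ ?_ ?_)
          · intro i j
            fin_cases i <;> fin_cases j <;>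
              first
                | exact hsinj p x hxp.symm
                | exact hsinj p y hpy
                | exact Ne.symm (hnosne y hy p)
                | exact hsinj q x hxq.symm
                | exact hsinj q y hqy
                | exact Ne.symm (hnosne y hy q)
                | exact hsinj r x hxr.symm
                | exact hsinj r y hry
                | exact Ne.symm (hnosne y hy r)
          · intro i j hij
            fin_cases i <;> fin_cases j <;>
              first
                | exact absurd rfl hij
                | exact hsinj p q hpq
                | exact hsinj q p hpq.symm
                | exact hsinj p r hpr
                | exact hsinj r p hpr.symm
                | exact hsinj q r hqr
                | exact hsinj r q hqr.symm
          · intro i j hij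
            fin_cases i <;> fin_cases j <;>
              first
                | exact absurd rfl hij
                | exact hsinj x y hxy
                | exact hsinj y x hxy.symm
                | exact Ne.symm (hnosne y hy x)
                | exact hnosne y hy x
                | exact Ne.symm (hnosne y hy y)
                | exact hnosne y hy y
          · intro i j
            fin_cases i <;> fin_cases j <;>
              first
                | exact hself p hp (s x) (hsmem x) (hsinj x p hxp)
                | exact hself p hp (s y) (hsmem y) (hsinj y p hpy.symm)
                | exact (hAdj y (s p) (hsmem p) (hsinj p y hpy)).symm
                | exact hself q hq (s x) (hsmem x) (hsinj x q hxq)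
                | exact hself q hq (s y) (hsmem y) (hsinj y q hqy.symm)
                | exact (hAdj y (s q) (hsmem q) (hsinj q y hqy)).symm
                | exact hself r hr (s x) (hsmem x) (hsinj x r hxr)
                | exact hself r hr (s y) (hsmem y) (hsinj y r hry.symm)
                | exact (hAdj y (s r) (hsmem r) (hsinj r y hry)).symm
      · by_cases h2 : I.card = 2
        · -- |I| = 2 : the K₅ minor configuration
          obtain ⟨p, hp, q, hq, hpq⟩ := ex2 (s := I) h2.ge
          have hJ : (Iᶜ : Finset (Fin 5)).card = 3 := by
            have := Finset.card_compl I
            simp at this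
            omega
          obtain ⟨a, ha, b, hb, c, hc, hab, hac, hbc⟩ := ex3 (s := Iᶜ) hJ.ge
          have ha' : a ∉ I := Finset.mem_compl.1 ha
          have hb' : b ∉ I := Finset.mem_compl.1 hb
          have hc' : c ∉ I := Finset.mem_compl.1 hc
          have hpa : p ≠ a := fun h => ha' (h ▸ hp)
          have hpb : p ≠ b := fun h => hb' (h ▸ hp)
          have hpc : p ≠ c := fun h => hc' (h ▸ hp)
          have hqa : q ≠ a := fun h => ha' (h ▸ hq)
          have hqb : q ≠ b := fun h => hb' (h ▸ hq)
          have hqc : q ≠ c := fun h => hc' (h ▸ hq)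
          refine hG.1 (k5_mixed G (s p) (s q) (s a) (s b) (s c) (v a) (v b) (v c)
            (hsinj p q hpq) (hsinj p a hpa) (hsinj p b hpb) (hsinj p c hpc)
            (hsinj q a hqa) (hsinj q b hqb) (hsinj q c hqc)
            (hsinj a b hab) (hsinj a c hac) (hsinj b c hbc)
            (hvv a b hab) (hvv a c hac) (hvv b c hbc)
            (hnosne a ha' p) (hnosne a ha' q) (hnosne a ha' a) (hnosne a ha' b) (hnosne a ha' c)
            (hnosne b hb' p) (hnosne b hb' q) (hnosne b hb' a) (hnosne b hb' b) (hnosne b hb' c)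
            (hnosne c hc' p) (hnosne c hc' q) (hnosne c hc' a) (hnosne c hc' b) (hnosne c hc' c)
            (hself p hp (s q) (hsmem q) (hsinj q p hpq.symm))
            (hself p hp (s a) (hsmem a) (hsinj a p hpa.symm))
            (hself p hp (s b) (hsmem b) (hsinj b p hpb.symm))
            (hself p hp (s c) (hsmem c) (hsinj c p hpc.symm))
            (hself q hq (s a) (hsmem a) (hsinj a q hqa.symm))
            (hself q hq (s b) (hsmem b) (hsinj b q hqb.symm))
            (hself q hq (s c) (hsmem c) (hsinj c q hqc.symm))
            (hAdj a (s b) (hsmem b) (hsinj b a hab.symm))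
            (hAdj a (s c) (hsmem c) (hsinj c a hac.symm))
            (hAdj b (s a) (hsmem a) (hsinj a b hab))
            (hAdj b (s c) (hsmem c) (hsinj c b hbc.symm))
            (hAdj c (s a) (hsmem a) (hsinj a c hac))
            (hAdj c (s b) (hsmem b) (hsinj b c hbc)))
        · -- |I| ≤ 1 : the K₃,₃ minor configuration
          have hJ : 4 ≤ (Iᶜ : Finset (Fin 5)).card := by
            have := Finset.card_compl I
            simp at this
            omega
          obtain ⟨a, ha, b, hb, c, hc, d, hd, hab, hac, had, hbc, hbd, hcd⟩ :=
            ex4 (s := Iᶜ) hJ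
          have ha' : a ∉ I := Finset.mem_compl.1 ha
          have hb' : b ∉ I := Finset.mem_compl.1 hb
          have hc' : c ∉ I := Finset.mem_compl.1 hc
          have hd' : d ∉ I := Finset.mem_compl.1 hd
          have hcard4 : ({a, b, c, d} : Finset (Fin 5)).card ≤ 4 := by
            have c1 := Finset.card_insert_le a ({b, c, d} : Finset (Fin 5))
            have c2 := Finset.card_insert_le b ({c, d} : Finset (Fin 5))
            have c3 := Finset.card_insert_le c ({d} : Finset (Fin 5))
            have c4 : ({d} : Finset (Fin 5)).card = 1 := Finset.card_singleton d
            omega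
          obtain ⟨z, hz⟩ := exists_notin {a, b, c, d} (by omega)
          have hza : z ≠ a := fun h => hz (by simp [h])
          have hzb : z ≠ b := fun h => hz (by simp [h])
          have hzc : z ≠ c := fun h => hz (by simp [h])
          have hzd : z ≠ d := fun h => hz (by simp [h])
          refine hG.2 (k33_mixed G (s a) (s b) (s d) (s z) (v a) (v b) (v c) (v d)
            (hsinj a b hab) (hsinj a d had) (hsinj a z hza.symm)
            (hsinj b d hbd) (hsinj b z hzb.symm) (hsinj d z hzd.symm)
            (hvv a b hab) (hvv a c hac) (hvv a d had)
            (hvv b c hbc) (hvv b d hbd) (hvv c d hcd)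
            (hnosne a ha' a) (hnosne a ha' b) (hnosne a ha' d) (hnosne a ha' z)
            (hnosne b hb' a) (hnosne b hb' b) (hnosne b hb' d) (hnosne b hb' z)
            (hnosne c hc' a) (hnosne c hc' b) (hnosne c hc' d) (hnosne c hc' z)
            (hnosne d hd' a) (hnosne d hd' b) (hnosne d hd' d) (hnosne d hd' z)
            (hAdj c (s a) (hsmem a) (hsinj a c hac))
            (hAdj c (s b) (hsmem b) (hsinj b c hbc))
            (hAdj c (s z) (hsmem z) (hsinj z c hzc))
            (hAdj d (s a) (hsmem a) (hsinj a d had))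
            (hAdj d (s b) (hsmem b) (hsinj b d hbd))
            (hAdj d (s z) (hsmem z) (hsinj z d hzd))
            (hAdj b (s a) (hsmem a) (hsinj a b hab))
            (hAdj a (s b) (hsmem b) (hsinj b a hab.symm))
            (hAdj a (s z) (hsmem z) (hsinj z a hza))
            (hAdj a (s d) (hsmem d) (hsinj d a had.symm))
            (hAdj b (s d) (hsmem d) (hsinj d b hbd.symm)))
  exact Nat.sInf_le h4
end

section
/- Let G be a graph and let G' be a core of G. Then q(G') ≤ q(G), where q denotes the non-adjacency witness number. -/
private lemma iterate_hom_adj {V' : Type*} {G' : SimpleGraph V'} (h : G' →g G') (n : ℕ) :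
    ∀ x y, G'.Adj x y → G'.Adj ((⇑h)^[n] x) ((⇑h)^[n] y) := by
  induction n with
  | zero => simp
  | succ n ih =>
      intro x y hxy
      simp only [Function.iterate_succ', Function.comp_apply]
      exact h.map_adj (ih x y hxy)

theorem statement9 {V V' : Type} [Fintype V] [Fintype V']
    (G : SimpleGraph V) (G' : SimpleGraph V')
    (hto : Nonempty (G →g G')) (hfrom : Nonempty (G' →g G))
    (hmin : ∀ (W : Type) [Fintype W] (H : SimpleGraph W),
      Nonempty (G →g H) → Nonempty (H →g G) → Fintype.card V' ≤ Fintype.card W) :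
    G'.nawn ≤ G.nawn := by
  classical
  obtain ⟨g⟩ := hto
  obtain ⟨f⟩ := hfrom
  set h : G' →g G' := g.comp f with hhdef
  -- h is surjective by minimality of the core
  have hsurj : Function.Surjective ⇑h := by
    have h1 : Fintype.card V' ≤ Fintype.card (Set.range ⇑h) := by
      refine hmin (Set.range ⇑h) (G'.induce (Set.range ⇑h))
        ⟨⟨fun v => ⟨h (g v), Set.mem_range_self _⟩, ?_⟩⟩
        ⟨⟨fun w => f w.1, ?_⟩⟩
      · intro a b hab
        exact h.map_adj (g.map_adj hab)
      · intro a b hab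
        exact f.map_adj hab
    have h2 : (Set.range ⇑h) = Set.univ := by
      apply Set.eq_of_subset_of_card_le (Set.subset_univ _)
      exact le_trans (le_of_eq (Fintype.card_congr (Equiv.Set.univ V'))) h1
    rw [← Set.range_eq_univ]
    exact h2
  have hinj : Function.Injective ⇑h := Finite.injective_iff_surjective.mpr hsurj
  -- some positive iterate of h is the identity
  have hiter : ∃ m > 0, ∀ x : V', (⇑h)^[m] x = x := by
    obtain ⟨a, b, hab, heq⟩ :=
      Finite.exists_ne_map_eq_of_infinite (fun n : ℕ => (⇑h)^[n])
    rcases hab.lt_or_gt with hlt | hlt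
    · refine ⟨b - a, by omega, fun x => ?_⟩
      have hinj' : Function.Injective ((⇑h)^[a]) := hinj.iterate a
      apply hinj'
      have : (⇑h)^[a + (b - a)] x = (⇑h)^[b] x := by
        congr 1; omega
      rw [Function.iterate_add_apply] at this
      rw [this, ← heq]
    · refine ⟨a - b, by omega, fun x => ?_⟩
      have hinj' : Function.Injective ((⇑h)^[b]) := hinj.iterate b
      apply hinj'
      have : (⇑h)^[b + (a - b)] x = (⇑h)^[a] x := by
        congr 1; omega
      rw [Function.iterate_add_apply] at this
      rw [this, heq]
  obtain ⟨m, hm, hmid⟩ := hiter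
  set hinv : V' → V' := (⇑h)^[m - 1] with hinvdef
  have hinv_left : ∀ x, hinv (h x) = x := by
    intro x
    have : (⇑h)^[m - 1] (h x) = (⇑h)^[m] x := by
      rw [← Function.iterate_succ_apply]
      congr 1; omega
    rw [hinvdef, this, hmid]
  have hinv_adj : ∀ x y, G'.Adj x y → G'.Adj (hinv x) (hinv y) :=
    iterate_hom_adj h (m - 1)
  -- the NAW set for G is nonempty
  have hNA : G.HasNAW (Fintype.card V + 1) := by
    refine ⟨by omega, fun T hT => ⟨T, subset_rfl, ?_, hT⟩⟩
    have := Finset.card_le_univ T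
    omega
  have hmem : G.HasNAW G.nawn := Nat.sInf_mem (s := {q | G.HasNAW q}) ⟨_, hNA⟩
  obtain ⟨hq, hnaw⟩ := hmem
  apply Nat.sInf_le
  refine ⟨hq, fun T' hT' => ?_⟩
  rcases T'.eq_empty_or_nonempty with rfl | ⟨t0, ht0⟩
  · exact ⟨∅, subset_rfl, by simp, hT'⟩
  -- choose representatives
  set sec : V → V' := fun s => if hs : ∃ t ∈ T', f t = s then hs.choose else t0 with hsecdef
  have hsec : ∀ s ∈ T'.image f, sec s ∈ T' ∧ f (sec s) = s := by
    intro s hs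
    rw [Finset.mem_image] at hs
    rw [hsecdef]
    simp only [dif_pos hs]
    exact hs.choose_spec
  have hS : G.NoCommonNbr (T'.image f) := by
    rintro ⟨v, hv⟩
    apply hT'
    refine ⟨hinv (g v), fun t ht => ?_⟩
    have h1 : G.Adj v (f t) := hv _ (Finset.mem_image_of_mem f ht)
    have h2 : G'.Adj (g v) (h t) := g.map_adj h1
    have h3 := hinv_adj _ _ h2
    rwa [hinv_left] at h3
  obtain ⟨S', hsub, hcard, hS'⟩ := hnaw _ hS
  refine ⟨S'.image sec, ?_, ?_, ?_⟩
  · intro x hx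
    rw [Finset.mem_image] at hx
    obtain ⟨s, hs, rfl⟩ := hx
    exact (hsec s (hsub hs)).1
  · exact le_trans (Finset.card_image_le) hcard
  · rintro ⟨w, hw⟩
    apply hS'
    refine ⟨f w, fun s hs => ?_⟩
    have h1 : G'.Adj w (sec s) := hw _ (Finset.mem_image_of_mem sec hs)
    have h2 := f.map_adj h1
    rwa [(hsec s (hsub hs)).2] at h2
end

section
/- If a graph G has a faithful d-dimensional independent representation over a field 𝔽, then q(G) ≤ d, where q(G) is the non-adjacency witness number of G. -/
/-- A `d`-dimensional independent representation of `G` over `𝔽`: each vertex gets a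
vector not lying in the span of its neighbors' vectors. -/
def IsIndepRep {V : Type*} (G : SimpleGraph V) (𝔽 : Type*) [Field 𝔽] (d : ℕ)
    (x : V → Fin d → 𝔽) : Prop :=
  ∀ v : V, x v ∉ Submodule.span 𝔽 (x '' G.neighborSet v)

/-- A faithful `d`-dimensional independent representation of `G` over `𝔽`:
an independent representation in which `u` and `v` are adjacent if and only if
`x u` lies in the span of the vectors of the neighbors of `v`. -/
def IsFaithfulIndepRep {V : Type*} (G : SimpleGraph V) (𝔽 : Type*) [Field 𝔽] (d : ℕ)
    (x : V → Fin d → 𝔽) : Prop :=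
  IsIndepRep G 𝔽 d x ∧
    ∀ u v : V, G.Adj u v ↔ x u ∈ Submodule.span 𝔽 (x '' G.neighborSet v)

theorem statement10 {V : Type*} (G : SimpleGraph V) (𝔽 : Type*) [Field 𝔽]
    (d : ℕ) (hd : 0 < d) (x : V → Fin d → 𝔽)
    (hx : IsFaithfulIndepRep G 𝔽 d x) :
    G.nawn ≤ d := by
  apply Nat.sInf_le
  refine ⟨hd, fun T hT => ?_⟩
  classical
  obtain ⟨b, hbT, hspan, hbind⟩ := exists_linearIndependent 𝔽 (x '' (T : Set V))
  have hbfin : b.Finite := hbind.setFinite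
  -- choose a vertex in T for each vector in b
  have hchoice : ∀ w ∈ b, ∃ t ∈ T, x t = w := by
    intro w hw
    obtain ⟨t, ht, rfl⟩ := hbT hw
    exact ⟨t, ht, rfl⟩
  choose f hf hfx using hchoice
  set T' : Finset V := hbfin.toFinset.attach.image (fun w => f w.1 (hbfin.mem_toFinset.mp w.2))
  refine ⟨T', ?_, ?_, ?_⟩
  · intro t ht
    simp only [T', Finset.mem_image] at ht
    obtain ⟨w, -, rfl⟩ := ht
    exact hf _ _
  · calc T'.card ≤ hbfin.toFinset.attach.card := Finset.card_image_le
      _ = hbfin.toFinset.card := Finset.card_attach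
      _ ≤ Module.finrank 𝔽 (Fin d → 𝔽) := by
          apply LinearIndependent.finset_card_le_finrank
          have : ((hbfin.toFinset : Finset (Fin d → 𝔽)) : Set (Fin d → 𝔽)) = b := by
            simp
          rw [show ((fun x => x : hbfin.toFinset → (Fin d → 𝔽))) =
              (fun y : hbfin.toFinset => ((⟨y.1, hbfin.mem_toFinset.mp y.2⟩ : b) : Fin d → 𝔽)) from rfl]
          exact hbind.comp _ (fun a c h => by have h' := congrArg Subtype.val h; exact Subtype.ext h')
      _ = d := by simp
  · rintro ⟨v, hv⟩
    apply hT
    refine ⟨v, fun t ht => ?_⟩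
    -- show span of x '' T ≤ span of neighbors of v
    have hsub : b ⊆ (Submodule.span 𝔽 (x '' G.neighborSet v) : Set (Fin d → 𝔽)) := by
      intro w hw
      have hadj : G.Adj v (f w hw) := hv _ (Finset.mem_image.mpr
        ⟨⟨w, hbfin.mem_toFinset.mpr hw⟩, Finset.mem_attach _ _, rfl⟩)
      have := (hx.2 (f w hw) v).mp hadj.symm
      rwa [hfx w hw] at this
    have hle : Submodule.span 𝔽 (x '' (T : Set V)) ≤
        Submodule.span 𝔽 (x '' G.neighborSet v) := by
      rw [← hspan]
      exact Submodule.span_le.mpr hsub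
    have hxt : x t ∈ Submodule.span 𝔽 (x '' (T : Set V)) :=
      Submodule.subset_span ⟨t, ht, rfl⟩
    exact ((hx.2 t v).mpr (hle hxt)).symm
end

section
/- For all positive integers m and r with m ≥ 2r, for every vertex B of the Kneser graph K(m,r), and over any field 𝔽 admitting a matrix M ∈ 𝔽^{(r−1)×m} in which every r−1 columns are linearly independent: if for each vertex A a vector x_A ∈ 𝔽^m is chosen with M x_A = 0 and with support exactly A, then the subspace U_B = span({x_C : C disjoint from B, |C| = r}) has dimension at most m − 2r + 1, and for every vertex A non-adjacent to B (i.e., A ∩ B ≠ ∅) it holds that x_A ∉ U_B. -/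
/-- Vertices of the Kneser graph `K(m,r)`: the `r`-element subsets of `{1,…,m}`. -/
abbrev KneserVertex (m r : ℕ) := {A : Finset (Fin m) // A.card = r}

theorem statement19 (m r : ℕ) (hr : 0 < r) (hm : 2 * r ≤ m)
    (𝔽 : Type*) [Field 𝔽]
    (M : Matrix (Fin (r - 1)) (Fin m) 𝔽)
    (hM : ∀ s : Finset (Fin m), s.card = r - 1 →
      LinearIndependent 𝔽 (fun i : s => fun j : Fin (r - 1) => M j (i : Fin m)))
    (x : KneserVertex m r → Fin m → 𝔽)
    (hMx : ∀ A : KneserVertex m r, M.mulVec (x A) = 0)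
    (hsupp : ∀ (A : KneserVertex m r) (i : Fin m), x A i ≠ 0 ↔ i ∈ A.1)
    (B : KneserVertex m r) :
    Module.finrank 𝔽
        ↥(Submodule.span 𝔽 (x '' {C : KneserVertex m r | Disjoint C.1 B.1}))
        ≤ m - 2 * r + 1 ∧
    ∀ A : KneserVertex m r, ¬ Disjoint A.1 B.1 →
      x A ∉ Submodule.span 𝔽 (x '' {C : KneserVertex m r | Disjoint C.1 B.1}) := by
  classical
  -- restriction to B
  let π : (Fin m → 𝔽) →ₗ[𝔽] ((B.1 : Finset (Fin m)) → 𝔽) :=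
    { toFun := fun v i => v i
      map_add' := fun v w => rfl
      map_smul' := fun c v => rfl }
  let Φ : (Fin m → 𝔽) →ₗ[𝔽] ((Fin (r - 1) → 𝔽) × ((B.1 : Finset (Fin m)) → 𝔽)) :=
    (M.mulVecLin).prod π
  -- the generators lie in ker Φ
  have hgen : x '' {C : KneserVertex m r | Disjoint C.1 B.1} ⊆ (LinearMap.ker Φ : Set _) := by
    rintro _ ⟨C, hC, rfl⟩
    simp only [SetLike.mem_coe, LinearMap.mem_ker]
    have h1 : M.mulVecLin (x C) = 0 := hMx C
    have h2 : π (x C) = 0 := by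
      funext i
      have hiB : (i : Fin m) ∈ B.1 := i.2
      have : (i : Fin m) ∉ C.1 := fun hiC => (Finset.disjoint_left.mp hC hiC) hiB
      have := (hsupp C i).not.mpr this
      simpa [π] using not_not.mp (by simpa using this)
    simp only [Φ, LinearMap.prod_apply, Function.prod, h1, h2]
    rfl
  have hspan : Submodule.span 𝔽 (x '' {C : KneserVertex m r | Disjoint C.1 B.1})
      ≤ LinearMap.ker Φ := Submodule.span_le.mpr hgen
  -- part 2
  have part2 : ∀ A : KneserVertex m r, ¬ Disjoint A.1 B.1 →
      x A ∉ Submodule.span 𝔽 (x '' {C : KneserVertex m r | Disjoint C.1 B.1}) := by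
    intro A hA hmem
    obtain ⟨i, hiA, hiB⟩ := Finset.not_disjoint_iff.mp hA
    have := hspan hmem
    rw [LinearMap.mem_ker] at this
    have h2 : π (x A) = 0 := congrArg Prod.snd this
    have : x A i = 0 := congrFun h2 ⟨i, hiB⟩
    exact ((hsupp A i).mpr hiA) this
  refine ⟨?_, part2⟩
  -- surjectivity of Φ
  have hsurj : Function.Surjective Φ := by
    rintro ⟨w, f⟩
    -- choose T ⊆ Bᶜ with |T| = r - 1
    have hcard : r - 1 ≤ B.1ᶜ.card := by
      rw [Finset.card_compl, Fintype.card_fin, B.2]; omega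
    obtain ⟨T, hTsub, hTcard⟩ := Finset.exists_subset_card_eq hcard
    -- columns of M on T span everything
    have hli := hM T hTcard
    have hspanT : Submodule.span 𝔽
        (Set.range (fun i : T => fun j : Fin (r - 1) => M j (i : Fin m))) = ⊤ := by
      apply hli.span_eq_top_of_card_eq_finrank'
      rw [Fintype.card_coe, hTcard, Module.finrank_pi, Fintype.card_fin]
    -- extend f by zero
    set f' : Fin m → 𝔽 := fun j => if h : j ∈ B.1 then f ⟨j, h⟩ else 0 with hf'
    set t : Fin (r - 1) → 𝔽 := w - M.mulVec f' with ht
    have htmem : t ∈ Submodule.span 𝔽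
        (Set.range (fun i : T => fun j : Fin (r - 1) => M j (i : Fin m))) := by
      rw [hspanT]; trivial
    obtain ⟨c, hc⟩ := (Submodule.mem_span_range_iff_exists_fun 𝔽).mp htmem
    set u : Fin m → 𝔽 := fun j => if h : j ∈ T then c ⟨j, h⟩ else 0 with hu
    have hMu : M.mulVec u = t := by
      funext k
      have step1 : M.mulVec u k = ∑ j ∈ T, M k j * u j := by
        rw [Matrix.mulVec, dotProduct]
        refine (Finset.sum_subset (Finset.subset_univ T) ?_).symm
        intro j _ hj
        simp [hu, hj]
      have step2 : ∑ j ∈ T, M k j * u j = ∑ j : T, c j * M k (j : Fin m) := by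
        rw [← Finset.sum_attach T (fun j => M k j * u j)]
        apply Finset.sum_congr rfl
        intro j _
        simp [hu, j.2, mul_comm]
      rw [step1, step2, ← hc]
      simp [Finset.sum_apply]
    have huB : ∀ i ∈ B.1, u i = 0 := by
      intro i hi
      have : i ∉ T := fun hiT => by
        have := hTsub hiT
        simp [Finset.mem_compl] at this
        exact this hi
      simp [hu, this]
    refine ⟨f' + u, ?_⟩
    have h1 : M.mulVecLin (f' + u) = w := by
      rw [map_add]
      show M.mulVec f' + M.mulVec u = w
      rw [hMu, ht]; abel
    have h2 : π (f' + u) = f := by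
      funext i
      have hiB : (i : Fin m) ∈ B.1 := i.2
      show f' i + u i = f i
      rw [huB i hiB, hf']
      simp [hiB]
    simp only [Φ, LinearMap.prod_apply, Function.prod, h1, h2]
  -- dimension count
  have hrank := LinearMap.finrank_range_add_finrank_ker Φ
  rw [LinearMap.range_eq_top.mpr hsurj] at hrank
  have hdim : Module.finrank 𝔽 ((Fin (r - 1) → 𝔽) × ((B.1 : Finset (Fin m)) → 𝔽))
      = (r - 1) + r := by
    rw [Module.finrank_prod, Module.finrank_pi, Module.finrank_pi, Fintype.card_fin,
      Fintype.card_coe, B.2]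
  rw [finrank_top, hdim] at hrank
  have hm' : Module.finrank 𝔽 (Fin m → 𝔽) = m := by
    rw [Module.finrank_pi, Fintype.card_fin]
  rw [hm'] at hrank
  have hker : Module.finrank 𝔽 (LinearMap.ker Φ) = m - 2 * r + 1 := by omega
  exact le_trans (Submodule.finrank_mono hspan) hker.le
end
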